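/- A gradual type S has a candidate codomain if and only if it has a least candidate codomain with respect to precision. Consequently the gradual codomain operator c̃od, defined to return this least candidate, is a well-defined partial function defined exactly on plausible function types. -/

import Mathlib

namespace GTFL

/-- Gradual types of GTFL⪍: `Int`, `Bool`, the unknown type `?`, arrow types,
record types `⟨l̄:S̄⟩`, and gradual row types `⟨l̄:S̄, ?⟩` (labels are naturals). -/
inductive GType : Type
  | int : GType
  | bool : GType
  | unk : GType
  | arrow : GType → GType → GType
  | record : List (Nat × GType) → GType
  | row : List (Nat × GType) → GType

/-- Static types are the gradual types that mention neither `?` nor gradual rows. -/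
inductive Static : GType → Prop
  | int : Static .int
  | bool : Static .bool
  | arrow {a b : GType} : Static a → Static b → Static (.arrow a b)
  | record {fs : List (Nat × GType)} :
      (∀ p ∈ fs, Static p.2) → Static (.record fs)

/-- Precision `S₁ ⊑ S₂` on gradual types: reflexive on base types, covariant for
arrows and records (pointwise), a record or gradual row whose fields extend those
of a gradual row (with precision on shared fields) is below that row, and every
type is below `?`. -/
inductive Prec : GType → GType → Prop
  | int : Prec .int .int
  | bool : Prec .bool .bool
  | arrow {a₁ b₁ a₂ b₂ : GType} :
      Prec a₁ a₂ → Prec b₁ b₂ → Prec (.arrow a₁ b₁) (.arrow a₂ b₂)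
  | record {fs₁ fs₂ : List (Nat × GType)} :
      fs₁.length = fs₂.length →
      (∀ pq ∈ List.zip fs₁ fs₂, pq.1.1 = pq.2.1) →
      (∀ pq ∈ List.zip fs₁ fs₂, Prec pq.1.2 pq.2.2) →
      Prec (.record fs₁) (.record fs₂)
  | recordRow {fs₁ fs₂ : List (Nat × GType)} :
      (∀ q ∈ fs₂, ∃ S, (q.1, S) ∈ fs₁) →
      (∀ q ∈ fs₂, ∀ p ∈ fs₁, p.1 = q.1 → Prec p.2 q.2) →
      Prec (.record fs₁) (.row fs₂)
  | rowRow {fs₁ fs₂ : List (Nat × GType)} :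
      (∀ q ∈ fs₂, ∃ S, (q.1, S) ∈ fs₁) →
      (∀ q ∈ fs₂, ∀ p ∈ fs₁, p.1 = q.1 → Prec p.2 q.2) →
      Prec (.row fs₁) (.row fs₂)
  | unk {S : GType} : Prec S .unk

/-- Static subtyping `T₁ <: T₂`: standard width/depth record subtyping with
contravariant arrow domains. -/
inductive Sub : GType → GType → Prop
  | int : Sub .int .int
  | bool : Sub .bool .bool
  | arrow {a₁ b₁ a₂ b₂ : GType} :
      Sub a₂ a₁ → Sub b₁ b₂ → Sub (.arrow a₁ b₁) (.arrow a₂ b₂)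
  | record {fs₁ fs₂ : List (Nat × GType)} :
      (∀ q ∈ fs₂, ∃ S, (q.1, S) ∈ fs₁) →
      (∀ q ∈ fs₂, ∀ p ∈ fs₁, p.1 = q.1 → Sub p.2 q.2) →
      Sub (.record fs₁) (.record fs₂)

/-- Consistent subtyping `S₁ ≲ S₂` of GTFL⪍. -/
inductive CSub : GType → GType → Prop
  | unkL {S : GType} : CSub .unk S
  | unkR {S : GType} : CSub S .unk
  | int : CSub .int .int
  | bool : CSub .bool .bool
  | arrow {a₁ b₁ a₂ b₂ : GType} :
      CSub a₂ a₁ → CSub b₁ b₂ → CSub (.arrow a₁ b₁) (.arrow a₂ b₂)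
  | recordRecord {fs₁ fs₂ : List (Nat × GType)} :
      (∀ q ∈ fs₂, ∃ S, (q.1, S) ∈ fs₁) →
      (∀ q ∈ fs₂, ∀ p ∈ fs₁, p.1 = q.1 → CSub p.2 q.2) →
      CSub (.record fs₁) (.record fs₂)
  | recordRow {fs₁ fs₂ : List (Nat × GType)} :
      (∀ q ∈ fs₂, ∃ S, (q.1, S) ∈ fs₁) →
      (∀ q ∈ fs₂, ∀ p ∈ fs₁, p.1 = q.1 → CSub p.2 q.2) →
      CSub (.record fs₁) (.row fs₂)
  | rowRecord {fs₁ fs₂ : List (Nat × GType)} :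
      (∀ q ∈ fs₂, ∀ p ∈ fs₁, p.1 = q.1 → CSub p.2 q.2) →
      CSub (.row fs₁) (.record fs₂)
  | rowRow {fs₁ fs₂ : List (Nat × GType)} :
      (∀ q ∈ fs₂, ∀ p ∈ fs₁, p.1 = q.1 → CSub p.2 q.2) →
      CSub (.row fs₁) (.row fs₂)

end GTFL

namespace GTFL

/-- A gradual type is a plausible function type if some static arrow type is below it. -/
def PlausibleFun (S : GType) : Prop :=
  ∃ T₁ T₂ : GType, Static T₁ ∧ Static T₂ ∧ Prec (.arrow T₁ T₂) S

/-- `S'` is a candidate codomain of a plausible function type `S` if every static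
arrow `T₁ → T₂ ⊑ S` has `T₂ ⊑ S'`. -/
def CandidateCod (S S' : GType) : Prop :=
  PlausibleFun S ∧
    ∀ T₁ T₂ : GType, Static T₁ → Static T₂ → Prec (.arrow T₁ T₂) S → Prec T₂ S'




/-! ### Auxiliary lemmas -/

lemma GType.one_le_sizeOf (t : GType) : 1 ≤ sizeOf t := by
  cases t <;> simp <;> omega

/-- Sum of sizes of a list of gradual types. -/
noncomputable def sumsz (vs : List GType) : Nat := (vs.map sizeOf).sum

@[simp] lemma sumsz_nil : sumsz [] = 0 := rfl
@[simp] lemma sumsz_cons (v : GType) (vs : List GType) :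
    sumsz (v :: vs) = sizeOf v + sumsz vs := by simp [sumsz]
@[simp] lemma sumsz_append (a b : List GType) : sumsz (a ++ b) = sumsz a + sumsz b := by
  simp [sumsz]

lemma sumsz_flatMap_lt (f : GType → List GType)
    (hf : ∀ v, sumsz (f v) + 1 ≤ sizeOf v) {vs : List GType} (h : vs ≠ []) :
    sumsz (vs.flatMap f) < sumsz vs := by
  induction vs with
  | nil => simp at h
  | cons v vs ih =>
    rw [List.flatMap_cons, sumsz_append, sumsz_cons]
    rcases eq_or_ne vs [] with rfl | hne
    · simpa using hf v
    · have h1 := hf v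
      have h2 := ih hne
      omega

lemma mem_flatMap_of {f : GType → List GType} {vs : List GType} {v x : GType}
    (hv : v ∈ vs) (hx : x ∈ f v) : x ∈ vs.flatMap f :=
  List.mem_flatMap.2 ⟨v, hv, hx⟩

lemma sizeOf_snd_lt_of_mem {p : Nat × GType} {fs : List (Nat × GType)} (h : p ∈ fs) :
    sizeOf p.2 < sizeOf fs := by
  induction fs with
  | nil => simp at h
  | cons q fs ih =>
    rcases List.mem_cons.1 h with rfl | h
    · cases p; simp; omega
    · have := ih h; simp; omega

lemma sumsz_filter_map_snd_le (P : Nat × GType → Bool) (gs : List (Nat × GType)) :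
    sumsz ((gs.filter P).map (·.2)) ≤ sizeOf gs := by
  induction gs with
  | nil => simp
  | cons q gs ih =>
    rw [List.filter_cons]
    by_cases h : P q
    · simp only [h, if_pos, List.map_cons, sumsz_cons]
      cases q; simp; omega
    · simp only [h]
      simp at h
      rw [if_neg (by simp [h])]
      cases q; simp at ih ⊢; omega

/-! ### Inversion lemmas for `Prec` -/

lemma prec_int_right {T : GType} (h : Prec T .int) : T = .int := by cases h <;> rfl
lemma prec_bool_right {T : GType} (h : Prec T .bool) : T = .bool := by cases h <;> rfl

lemma prec_int_left {v : GType} (h : Prec .int v) : v = .int ∨ v = .unk := by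
  cases h <;> simp

lemma prec_bool_left {v : GType} (h : Prec .bool v) : v = .bool ∨ v = .unk := by
  cases h <;> simp

lemma prec_arrow_arrow {a b c d : GType} (h : Prec (.arrow a b) (.arrow c d)) :
    Prec a c ∧ Prec b d := by cases h with | arrow h1 h2 => exact ⟨h1, h2⟩

lemma prec_arrow_left {a b v : GType} (h : Prec (.arrow a b) v) :
    (∃ c d, v = .arrow c d ∧ Prec a c ∧ Prec b d) ∨ v = .unk := by
  cases h with
  | arrow h1 h2 => exact .inl ⟨_, _, rfl, h1, h2⟩
  | unk => exact .inr rfl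

lemma prec_arrow_right {T a b : GType} (h : Prec T (.arrow a b)) :
    ∃ c d, T = .arrow c d ∧ Prec c a ∧ Prec d b := by
  cases h with | arrow h1 h2 => exact ⟨_, _, rfl, h1, h2⟩

lemma prec_record_left {fs : List (Nat × GType)} {v : GType} (h : Prec (.record fs) v) :
    (∃ gs, v = .record gs) ∨ (∃ gs, v = .row gs) ∨ v = .unk := by
  cases h with
  | record _ _ _ => exact .inl ⟨_, rfl⟩
  | recordRow _ _ => exact .inr (.inl ⟨_, rfl⟩)
  | unk => exact .inr (.inr rfl)

lemma prec_record_right {T : GType} {fs : List (Nat × GType)} (h : Prec T (.record fs)) :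
    ∃ gs, T = .record gs ∧ Prec (.record gs) (.record fs) := by
  cases h with | record h1 h2 h3 => exact ⟨_, rfl, .record h1 h2 h3⟩

lemma static_not_row {gs : List (Nat × GType)} (h : Static (.row gs)) : False := by
  cases h

lemma static_prec_row {T : GType} {gs : List (Nat × GType)} (hT : Static T)
    (h : Prec T (.row gs)) :
    ∃ hs, T = .record hs ∧ (∀ q ∈ gs, ∃ S, (q.1, S) ∈ hs) ∧
      (∀ q ∈ gs, ∀ p ∈ hs, p.1 = q.1 → Prec p.2 q.2) := by
  cases h with
  | recordRow h1 h2 => exact ⟨_, rfl, h1, h2⟩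
  | rowRow h1 h2 => exact absurd hT (by intro h; cases h)

lemma prec_record_row {fs gs : List (Nat × GType)} (h : Prec (.record fs) (.row gs)) :
    (∀ q ∈ gs, ∃ S, (q.1, S) ∈ fs) ∧ (∀ q ∈ gs, ∀ p ∈ fs, p.1 = q.1 → Prec p.2 q.2) := by
  cases h with | recordRow h1 h2 => exact ⟨h1, h2⟩

lemma static_record_fields {fs : List (Nat × GType)} (h : Static (.record fs)) :
    ∀ p ∈ fs, Static p.2 := by cases h with | record h => exact h

lemma static_arrow_parts {a b : GType} (h : Static (.arrow a b)) : Static a ∧ Static b := by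
  cases h with | arrow h1 h2 => exact ⟨h1, h2⟩

/-- Positional characterization of record precision. -/
lemma prec_record_record_iff {fs gs : List (Nat × GType)} :
    Prec (.record fs) (.record gs) ↔
      fs.length = gs.length ∧
      ∀ i (h1 : i < fs.length) (h2 : i < gs.length),
        fs[i].1 = gs[i].1 ∧ Prec fs[i].2 gs[i].2 := by
  constructor
  · intro h
    cases h with
    | record hlen hlab hval =>
      refine ⟨hlen, fun i h1 h2 => ?_⟩
      have hz : i < (fs.zip gs).length := by rw [List.length_zip]; omega
      have hmem : (fs[i], gs[i]) ∈ fs.zip gs := by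
        have := List.getElem_mem hz
        rwa [List.getElem_zip] at this
      exact ⟨hlab _ hmem, hval _ hmem⟩
  · rintro ⟨hlen, h⟩
    refine .record hlen ?_ ?_ <;>
    · intro pq hpq
      obtain ⟨i, hi, hget⟩ := List.mem_iff_getElem.1 hpq
      rw [List.getElem_zip] at hget
      have h1 : i < fs.length := by rw [List.length_zip] at hi; omega
      have h2 : i < gs.length := by rw [List.length_zip] at hi; omega
      have := h i h1 h2
      rw [← hget]
      first
      | exact this.1
      | exact this.2

lemma forces_unk {L : GType} (h1 : Prec .int L) (h2 : Prec .bool L) : L = .unk := by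
  rcases prec_int_left h1 with rfl | rfl
  · cases h2
  · rfl

lemma le_foldr_max {l : List Nat} {a : Nat} (h : a ∈ l) : a ≤ l.foldr max 0 := by
  induction l with
  | nil => simp at h
  | cons b l ih =>
    rcases List.mem_cons.1 h with rfl | h
    · simp
    · simp only [List.foldr_cons]; exact le_trans (ih h) (le_max_right _ _)

/-- `L` is an upper bound of all static types below every member of `vs`. -/
def IsUB (vs : List GType) (L : GType) : Prop :=
  ∀ T, Static T → (∀ v ∈ vs, Prec T v) → Prec T L



lemma mem_set_self {α} (l : List α) (i : Nat) (x : α) (h : i < l.length) : x ∈ l.set i x := by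
  have h' : i < (l.set i x).length := by simpa using h
  exact List.mem_iff_getElem.2 ⟨i, h', List.getElem_set_self h'⟩

/-! ### Auxiliary extraction functions -/

/-- Domain of an arrow, as a (≤1)-element list. -/
def domf : GType → List GType
  | .arrow a _ => [a]
  | _ => []

/-- Codomain of an arrow, as a (≤1)-element list. -/
def codf : GType → List GType
  | .arrow _ b => [b]
  | _ => []

/-- `j`-th field value of a record; values at label `l` of a row. -/
def recCf (j : Nat) (l : Nat) : GType → List GType
  | .record fs => ((fs[j]?).map Prod.snd).toList
  | .row gs => (gs.filter (fun r => r.1 == l)).map (·.2)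
  | _ => []

/-- Values at label `l` of a row. -/
def rowCf (l : Nat) : GType → List GType
  | .row gs => (gs.filter (fun r => r.1 == l)).map (·.2)
  | _ => []

/-- Labels of a row. -/
def labf : GType → List Nat
  | .row gs => gs.map (·.1)
  | _ => []

theorem exists_least_ub :
    ∀ n : Nat, ∀ vs : List GType, sumsz vs ≤ n →
      ∀ w, Static w → (∀ v ∈ vs, Prec w v) →
      ∃ L, IsUB vs L ∧ ∀ L', IsUB vs L' → Prec L L' := by
  intro n
  induction n using Nat.strong_induction_on with
  | _ n IH =>
  intro vs hsz w hw hwv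
  by_cases hallunk : ∀ v ∈ vs, v = GType.unk
  · refine ⟨.unk, fun T _ _ => .unk, fun L' hL' => ?_⟩
    have hi : Prec .int L' := hL' .int .int (fun v hv => by rw [hallunk v hv]; exact .unk)
    have hb : Prec .bool L' := hL' .bool .bool (fun v hv => by rw [hallunk v hv]; exact .unk)
    rw [forces_unk hi hb]; exact .unk
  · push_neg at hallunk
    obtain ⟨v₀, hv₀mem, hv₀⟩ := hallunk
    have hvsne : vs ≠ [] := fun h => by rw [h] at hv₀mem; simp at hv₀mem
    cases hw with
    | int =>
      refine ⟨.int, ?_, ?_⟩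
      · intro T hT hTv
        have h0 := hTv v₀ hv₀mem
        rcases prec_int_left (hwv v₀ hv₀mem) with rfl | rfl
        · rw [prec_int_right h0]; exact .int
        · exact absurd rfl hv₀
      · intro L' hL'
        exact hL' .int .int hwv
    | bool =>
      refine ⟨.bool, ?_, ?_⟩
      · intro T hT hTv
        have h0 := hTv v₀ hv₀mem
        rcases prec_bool_left (hwv v₀ hv₀mem) with rfl | rfl
        · rw [prec_bool_right h0]; exact .bool
        · exact absurd rfl hv₀
      · intro L' hL'
        exact hL' .bool .bool hwv
    | arrow hwa hwb =>
      rename_i wa wb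
      have hdle : ∀ v : GType, sumsz (domf v) + 1 ≤ sizeOf v := by
        intro v
        have h1 := GType.one_le_sizeOf v
        cases v <;> simp [domf] at h1 ⊢ <;> omega
      have hcle : ∀ v : GType, sumsz (codf v) + 1 ≤ sizeOf v := by
        intro v
        have h1 := GType.one_le_sizeOf v
        cases v <;> simp [codf] at h1 ⊢ <;> omega
      obtain ⟨a₀, b₀, hv₀eq⟩ : ∃ a b, v₀ = GType.arrow a b := by
        rcases prec_arrow_left (hwv v₀ hv₀mem) with ⟨a, b, h, _, _⟩ | h
        · exact ⟨a, b, h⟩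
        · exact absurd h hv₀
      have hdlt : sumsz (vs.flatMap domf) < n :=
        lt_of_lt_of_le (sumsz_flatMap_lt domf hdle hvsne) hsz
      have hclt : sumsz (vs.flatMap codf) < n :=
        lt_of_lt_of_le (sumsz_flatMap_lt codf hcle hvsne) hsz
      have hwa' : ∀ d ∈ vs.flatMap domf, Prec wa d := by
        intro d hd
        obtain ⟨v, hv, hdv⟩ := List.mem_flatMap.1 hd
        cases v <;> simp [domf] at hdv
        subst hdv
        exact (prec_arrow_arrow (hwv _ hv)).1
      have hwb' : ∀ d ∈ vs.flatMap codf, Prec wb d := by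
        intro d hd
        obtain ⟨v, hv, hdv⟩ := List.mem_flatMap.1 hd
        cases v <;> simp [codf] at hdv
        subst hdv
        exact (prec_arrow_arrow (hwv _ hv)).2
      obtain ⟨La, hLaU, hLaM⟩ := IH _ hdlt (vs.flatMap domf) le_rfl wa hwa hwa'
      obtain ⟨Lb, hLbU, hLbM⟩ := IH _ hclt (vs.flatMap codf) le_rfl wb hwb hwb'
      refine ⟨.arrow La Lb, ?_, ?_⟩
      · intro T hT hTv
        obtain ⟨ta, tb, rfl, h1, h2⟩ := prec_arrow_right (hv₀eq ▸ hTv v₀ hv₀mem)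
        obtain ⟨hta, htb⟩ := static_arrow_parts hT
        refine .arrow (hLaU ta hta ?_) (hLbU tb htb ?_)
        · intro d hd
          obtain ⟨v, hv, hdv⟩ := List.mem_flatMap.1 hd
          cases v <;> simp [domf] at hdv
          subst hdv
          exact (prec_arrow_arrow (hTv _ hv)).1
        · intro d hd
          obtain ⟨v, hv, hdv⟩ := List.mem_flatMap.1 hd
          cases v <;> simp [codf] at hdv
          subst hdv
          exact (prec_arrow_arrow (hTv _ hv)).2
      · intro L' hL'
        have hwL' : Prec (.arrow wa wb) L' := hL' _ (.arrow hwa hwb) hwv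
        rcases prec_arrow_left hwL' with ⟨a', b', rfl, _, _⟩ | rfl
        · refine .arrow (hLaM a' ?_) (hLbM b' ?_)
          · intro T' hT' hT'd
            have h : Prec (.arrow T' wb) (.arrow a' b') := by
              refine hL' _ (.arrow hT' hwb) ?_
              intro v hv
              rcases prec_arrow_left (hwv v hv) with ⟨a, b, rfl, h1, h2⟩ | rfl
              · exact .arrow (hT'd a (mem_flatMap_of hv (by simp [domf]))) h2
              · exact .unk
            exact (prec_arrow_arrow h).1
          · intro T' hT' hT'd
            have h : Prec (.arrow wa T') (.arrow a' b') := by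
              refine hL' _ (.arrow hwa hT') ?_
              intro v hv
              rcases prec_arrow_left (hwv v hv) with ⟨a, b, rfl, h1, h2⟩ | rfl
              · exact .arrow h1 (hT'd b (mem_flatMap_of hv (by simp [codf])))
              · exact .unk
            exact (prec_arrow_arrow h).2
        · exact .unk
    | record hws =>
      rename_i ws
      by_cases hrec : ∃ fs, GType.record fs ∈ vs
      · -- Subcase A: some record is present in `vs`.
        obtain ⟨fsR, hfsR⟩ := hrec
        have hR := prec_record_record_iff.1 (hwv _ hfsR)
        set k := ws.length with hk
        let lab : Nat → Nat := fun j => ((ws[j]?).map Prod.fst).getD 0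
        have hlabj : ∀ j (hj : j < k), lab j = (ws[j]'hj).1 := by
          intro j hj
          simp [lab, List.getElem?_eq_getElem hj]
        have hCle : ∀ j (v : GType), sumsz (recCf j (lab j) v) + 1 ≤ sizeOf v := by
          intro j v
          cases v with
          | record fs =>
            rcases h : fs[j]? with _ | p
            · simp [recCf, h]
            · have hp : p ∈ fs := by
                rw [List.getElem?_eq_some_iff] at h
                obtain ⟨hi, rfl⟩ := h
                exact List.getElem_mem hi
              have := sizeOf_snd_lt_of_mem hp
              simp [recCf, h]; omega
          | row gs =>
            have := sumsz_filter_map_snd_le (fun r => r.1 == lab j) gs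
            simp [recCf]; omega
          | int => simp [recCf]
          | bool => simp [recCf]
          | unk => simp [recCf]
          | arrow a b =>
            have := GType.one_le_sizeOf a; have := GType.one_le_sizeOf b
            simp [recCf]; omega
        have hwit : ∀ j (hj : j < k),
            ∀ x ∈ vs.flatMap (recCf j (lab j)), Prec ((ws[j]'hj).2) x := by
          intro j hj x hx
          obtain ⟨v, hv, hxv⟩ := List.mem_flatMap.1 hx
          cases v with
          | record fs =>
            simp [recCf] at hxv
            obtain ⟨p1, hsome⟩ := hxv
            obtain ⟨hjlen, hget⟩ := List.getElem?_eq_some_iff.1 hsome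
            have hfs := prec_record_record_iff.1 (hwv _ hv)
            have := (hfs.2 j hj hjlen).2
            rw [hget] at this
            exact this
          | row gs =>
            simp [recCf] at hxv
            have hrr := prec_record_row (hwv _ hv)
            exact hrr.2 (lab j, x) hxv (ws[j]'hj) (List.getElem_mem hj) (hlabj j hj).symm
          | int => simp [recCf] at hxv
          | bool => simp [recCf] at hxv
          | unk => simp [recCf] at hxv
          | arrow a b => simp [recCf] at hxv
        have hexist : ∀ j, ∃ Lj, j < k →
            IsUB (vs.flatMap (recCf j (lab j))) Lj ∧
              ∀ L', IsUB (vs.flatMap (recCf j (lab j))) L' → Prec Lj L' := by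
          intro j
          by_cases hj : j < k
          · have hlt : sumsz (vs.flatMap (recCf j (lab j))) < n :=
              lt_of_lt_of_le (sumsz_flatMap_lt _ (hCle j) hvsne) hsz
            obtain ⟨L, h1, h2⟩ := IH _ hlt _ le_rfl ((ws[j]'hj).2)
              (hws _ (List.getElem_mem hj)) (hwit j hj)
            exact ⟨L, fun _ => ⟨h1, h2⟩⟩
          · exact ⟨.unk, fun h => absurd h hj⟩
        choose f hf using hexist
        have hsetp : ∀ j (hj : j < k), ∀ T', Static T' →
            (∀ x ∈ vs.flatMap (recCf j (lab j)), Prec T' x) →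
            Static (.record (ws.set j (lab j, T'))) ∧
              ∀ v ∈ vs, Prec (.record (ws.set j (lab j, T'))) v := by
          intro j hj T' hT' hT'C
          constructor
          · refine .record ?_
            intro p hp
            rcases List.mem_or_eq_of_mem_set hp with hp | rfl
            · exact hws p hp
            · exact hT'
          · intro v hv
            rcases prec_record_left (hwv v hv) with ⟨fs, rfl⟩ | ⟨gsv, rfl⟩ | rfl
            · have hwfs := prec_record_record_iff.1 (hwv _ hv)
              refine prec_record_record_iff.2 ⟨by simpa using hwfs.1, ?_⟩
              intro i h1 h2
              have hik : i < k := by simpa using h1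
              by_cases hij : i = j
              · subst hij
                have hgetset : (ws.set i (lab i, T'))[i]'h1 = (lab i, T') :=
                  List.getElem_set_self _
                constructor
                · rw [hgetset]
                  show lab i = fs[i].1
                  rw [hlabj i hik]
                  exact (hwfs.2 i hik h2).1
                · rw [hgetset]
                  show Prec T' fs[i].2
                  refine hT'C _ (mem_flatMap_of hv ?_)
                  simp [recCf]
                  exact ⟨fs[i].1, by simp [List.getElem?_eq_getElem h2]⟩
              · have hgetset : (ws.set j (lab j, T'))[i]'h1 = ws[i]'hik :=
                  List.getElem_set_ne (fun h => hij h.symm) _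
                rw [hgetset]
                exact hwfs.2 i hik h2
            · have hwgs := prec_record_row (hwv _ hv)
              refine .recordRow ?_ ?_
              · intro q hq
                obtain ⟨S, hS⟩ := hwgs.1 q hq
                obtain ⟨i, hi, hgi⟩ := List.mem_iff_getElem.1 hS
                by_cases hij : i = j
                · subst hij
                  refine ⟨T', ?_⟩
                  have hq1 : q.1 = lab i := by rw [hlabj i hi, hgi]
                  rw [hq1]
                  exact mem_set_self _ _ _ hi
                · refine ⟨S, ?_⟩
                  have hlen : i < (ws.set j (lab j, T')).length := by simpa using hi
                  have h1 : (ws.set j (lab j, T'))[i]'hlen = ws[i]'hi :=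
                    List.getElem_set_ne (fun h => hij h.symm) hlen
                  have h2 := List.getElem_mem hlen
                  rwa [h1, hgi] at h2
              · intro q hq p hp hpq
                rcases List.mem_or_eq_of_mem_set hp with hp' | rfl
                · exact hwgs.2 q hq p hp' hpq
                · refine hT'C _ (mem_flatMap_of hv ?_)
                  simp [recCf]
                  have hpq' : lab j = q.1 := hpq
                  rw [hpq']
                  exact hq
            · exact .unk
        have hfsRlen : fsR.length = k := hR.1.symm
        refine ⟨.record ((List.range k).map fun j => (lab j, f j)), ?_, ?_⟩
        · intro T hT hTv
          obtain ⟨gs, rfl, hgsR⟩ := prec_record_right (hTv _ hfsR)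
          have hgsR' := prec_record_record_iff.1 hgsR
          have hglen : gs.length = k := by rw [hgsR'.1, hfsRlen]
          refine prec_record_record_iff.2 ⟨by simp [hglen], ?_⟩
          intro i h1 h2
          have hik : i < k := by simpa using h2
          have hif : i < fsR.length := by omega
          have hLget : (((List.range k).map fun j => (lab j, f j))[i]'h2) = (lab i, f i) := by
            simp
          rw [hLget]
          constructor
          · show gs[i].1 = lab i
            rw [hlabj i hik, (hgsR'.2 i h1 hif).1, (hR.2 i hik hif).1]
          · show Prec gs[i].2 (f i)
            refine (hf i hik).1 _ (static_record_fields hT _ (List.getElem_mem h1)) ?_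
            intro x hx
            obtain ⟨v, hv, hxv⟩ := List.mem_flatMap.1 hx
            cases v with
            | record fs =>
              simp [recCf] at hxv
              obtain ⟨p1, hsome⟩ := hxv
              obtain ⟨hjlen, hget⟩ := List.getElem?_eq_some_iff.1 hsome
              have hfs := prec_record_record_iff.1 (hTv _ hv)
              have := (hfs.2 i h1 hjlen).2
              rw [hget] at this
              exact this
            | row gsv =>
              simp [recCf] at hxv
              have hrr := prec_record_row (hTv _ hv)
              refine hrr.2 (lab i, x) hxv (gs[i]'h1) (List.getElem_mem h1) ?_
              show gs[i].1 = lab i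
              rw [hlabj i hik, (hgsR'.2 i h1 hif).1, (hR.2 i hik hif).1]
            | int => simp [recCf] at hxv
            | bool => simp [recCf] at hxv
            | unk => simp [recCf] at hxv
            | arrow a b => simp [recCf] at hxv
        · intro L' hL'
          have hwL' := hL' _ (.record hws) hwv
          rcases prec_record_left hwL' with ⟨fs', rfl⟩ | ⟨fs', rfl⟩ | rfl
          · have hW := prec_record_record_iff.1 hwL'
            refine prec_record_record_iff.2 ⟨by simp [← hW.1, hk], ?_⟩
            intro i h1 h2
            have hik : i < k := by simpa using h1
            have hLget : (((List.range k).map fun j => (lab j, f j))[i]'h1) = (lab i, f i) := by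
              simp
            rw [hLget]
            constructor
            · show lab i = fs'[i].1
              rw [hlabj i hik]
              exact (hW.2 i hik h2).1
            · show Prec (f i) fs'[i].2
              refine (hf i hik).2 _ ?_
              intro T' hT' hT'C
              obtain ⟨hst, hpr⟩ := hsetp i hik T' hT' hT'C
              have h := prec_record_record_iff.1 (hL' _ hst hpr)
              have hlen : i < (ws.set i (lab i, T')).length := by simpa using hik
              have := (h.2 i hlen h2).2
              rwa [List.getElem_set_self hlen] at this
          · have hW := prec_record_row hwL'
            refine .recordRow ?_ ?_
            · intro q hq
              obtain ⟨S, hS⟩ := hW.1 q hq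
              obtain ⟨i, hi, hgi⟩ := List.mem_iff_getElem.1 hS
              refine ⟨f i, ?_⟩
              have hq1 : q.1 = lab i := by rw [hlabj i hi, hgi]
              rw [hq1]
              exact List.mem_map.2 ⟨i, List.mem_range.2 hi, rfl⟩
            · intro q hq p hp hpq
              obtain ⟨i, hir, rfl⟩ := List.mem_map.1 hp
              have hik := List.mem_range.1 hir
              refine (hf i hik).2 _ ?_
              intro T' hT' hT'C
              obtain ⟨hst, hpr⟩ := hsetp i hik T' hT' hT'C
              have h := prec_record_row (hL' _ hst hpr)
              have hmem : (lab i, T') ∈ ws.set i (lab i, T') :=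
                mem_set_self _ _ _ hik
              exact h.2 q hq (lab i, T') hmem (by simpa using hpq)
          · exact .unk
      · -- Subcase B: no record in `vs`; every non-unk element is a row.
        have hrow : ∀ v ∈ vs, (∃ gs, v = GType.row gs) ∨ v = GType.unk := by
          intro v hv
          rcases prec_record_left (hwv v hv) with ⟨fs, rfl⟩ | ⟨gs, rfl⟩ | rfl
          · exact absurd ⟨fs, hv⟩ hrec
          · exact .inl ⟨gs, rfl⟩
          · exact .inr rfl
        obtain ⟨gs₀, hv₀eq⟩ : ∃ gs, v₀ = GType.row gs := by
          rcases hrow v₀ hv₀mem with h | h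
          · exact h
          · exact absurd h hv₀
        have hCle : ∀ l (v : GType), sumsz (rowCf l v) + 1 ≤ sizeOf v := by
          intro l v
          cases v with
          | row gs =>
            have := sumsz_filter_map_snd_le (fun r => r.1 == l) gs
            simp [rowCf]; omega
          | record fs => simp [rowCf]
          | int => simp [rowCf]
          | bool => simp [rowCf]
          | unk => simp [rowCf]
          | arrow a b =>
            have := GType.one_le_sizeOf a; have := GType.one_le_sizeOf b
            simp [rowCf]; omega
        -- membership in Λ
        have hΛof : ∀ {gs : List (Nat × GType)}, GType.row gs ∈ vs → ∀ r ∈ gs,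
            r.1 ∈ vs.flatMap labf := by
          intro gs hv r hr
          exact List.mem_flatMap.2 ⟨.row gs, hv, by simp [labf]; exact ⟨r.2, hr⟩⟩
        have hΛdest : ∀ l ∈ vs.flatMap labf, ∃ gs, GType.row gs ∈ vs ∧ ∃ S, (l, S) ∈ gs := by
          intro l hl
          obtain ⟨v, hv, hlv⟩ := List.mem_flatMap.1 hl
          cases v with
          | row gs =>
            simp [labf] at hlv
            obtain ⟨S, hS⟩ := hlv
            exact ⟨gs, hv, S, hS⟩
          | record fs => simp [labf] at hlv
          | int => simp [labf] at hlv
          | bool => simp [labf] at hlv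
          | unk => simp [labf] at hlv
          | arrow a b => simp [labf] at hlv
        -- membership in C l
        have hCdest : ∀ l x, x ∈ vs.flatMap (rowCf l) →
            ∃ gs, GType.row gs ∈ vs ∧ (l, x) ∈ gs := by
          intro l x hx
          obtain ⟨v, hv, hxv⟩ := List.mem_flatMap.1 hx
          cases v with
          | row gs =>
            simp [rowCf] at hxv
            exact ⟨gs, hv, hxv⟩
          | record fs => simp [rowCf] at hxv
          | int => simp [rowCf] at hxv
          | bool => simp [rowCf] at hxv
          | unk => simp [rowCf] at hxv
          | arrow a b => simp [rowCf] at hxv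
        have hCof : ∀ {gs : List (Nat × GType)} {l x}, GType.row gs ∈ vs → (l, x) ∈ gs →
            x ∈ vs.flatMap (rowCf l) := by
          intro gs l x hv hlx
          refine List.mem_flatMap.2 ⟨.row gs, hv, ?_⟩
          simp [rowCf]
          exact hlx
        have hexist : ∀ l, ∃ Ml, l ∈ vs.flatMap labf →
            IsUB (vs.flatMap (rowCf l)) Ml ∧
              ∀ L', IsUB (vs.flatMap (rowCf l)) L' → Prec Ml L' := by
          intro l
          by_cases hl : l ∈ vs.flatMap labf
          · obtain ⟨gs, hgsv, S, hS⟩ := hΛdest l hl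
            have hSws : ∃ S', (l, S') ∈ ws := (prec_record_row (hwv _ hgsv)).1 (l, S) hS
            obtain ⟨S', hS'⟩ := hSws
            have hub : ∀ x ∈ vs.flatMap (rowCf l), Prec S' x := by
              intro x hx
              obtain ⟨gs', hgs'v, hlx⟩ := hCdest l x hx
              exact (prec_record_row (hwv _ hgs'v)).2 (l, x) hlx (l, S') hS' rfl
            have hlt : sumsz (vs.flatMap (rowCf l)) < n :=
              lt_of_lt_of_le (sumsz_flatMap_lt _ (hCle l) hvsne) hsz
            obtain ⟨M, h1, h2⟩ := IH _ hlt _ le_rfl S' (hws _ hS') hub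
            exact ⟨M, fun _ => ⟨h1, h2⟩⟩
          · exact ⟨.unk, fun h => absurd h hl⟩
        choose g hg using hexist
        refine ⟨.row ((vs.flatMap labf).map fun l => (l, g l)), ?_, ?_⟩
        · -- IsUB
          intro T hT hTv
          obtain ⟨hs, rfl, hE, hV⟩ := static_prec_row hT (hv₀eq ▸ hTv v₀ hv₀mem)
          refine .recordRow ?_ ?_
          · intro q hq
            obtain ⟨l, hlΛ, rfl⟩ := List.mem_map.1 hq
            obtain ⟨gs, hgsv, S, hS⟩ := hΛdest l hlΛ
            exact (prec_record_row (hTv _ hgsv)).1 (l, S) hS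
          · intro q hq p hp hpq
            obtain ⟨l, hlΛ, rfl⟩ := List.mem_map.1 hq
            have hpq' : p.1 = l := hpq
            refine (hg l hlΛ).1 p.2 (static_record_fields hT _ hp) ?_
            intro x hx
            obtain ⟨gs', hgs'v, hlx⟩ := hCdest l x hx
            exact (prec_record_row (hTv _ hgs'v)).2 (l, x) hlx p hp hpq'
        · -- leastness
          intro L' hL'
          have hwL' := hL' _ (.record hws) hwv
          rcases prec_record_left hwL' with ⟨fs', rfl⟩ | ⟨fs', rfl⟩ | rfl
          · -- L' cannot be a record: add a fresh field to w
            exfalso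
            set fresh := (vs.flatMap labf).foldr max 0 + 1 with hfresh
            have hfreshΛ : ∀ l ∈ vs.flatMap labf, l ≠ fresh := by
              intro l hl
              have := le_foldr_max hl
              omega
            have hw' : Prec (.record (ws ++ [(fresh, .int)])) (.record fs') := by
              refine hL' _ ?_ ?_
              · refine .record ?_
                intro p hp
                rcases List.mem_append.1 hp with hp | hp
                · exact hws p hp
                · simp at hp; rw [hp]; exact .int
              · intro v hv
                rcases hrow v hv with ⟨gs, rfl⟩ | rfl
                · have hwgs := prec_record_row (hwv _ hv)
                  refine .recordRow ?_ ?_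
                  · intro q hq
                    obtain ⟨S, hS⟩ := hwgs.1 q hq
                    exact ⟨S, List.mem_append_left _ hS⟩
                  · intro q hq p hp hpq
                    rcases List.mem_append.1 hp with hp | hp
                    · exact hwgs.2 q hq p hp hpq
                    · simp at hp
                      rw [hp] at hpq
                      exact absurd hpq.symm (hfreshΛ q.1 (hΛof hv q hq))
                · exact .unk
            have l1 := (prec_record_record_iff.1 hwL').1
            have l2 := (prec_record_record_iff.1 hw').1
            simp at l2
            omega
          · -- L' is a row
            have hfilter : ∀ (P : Nat × GType → Bool),
                (∀ q ∈ ws.filter P, Static q.2) := by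
              intro P q hq
              exact hws q (List.mem_filter.1 hq).1
            have hw'' : Prec (.record (ws.filter (fun r => decide (r.1 ∈ vs.flatMap labf)))) (.row fs') := by
              refine hL' _ (.record (hfilter _)) ?_
              intro v hv
              rcases hrow v hv with ⟨gs, rfl⟩ | rfl
              · have hwgs := prec_record_row (hwv _ hv)
                refine .recordRow ?_ ?_
                · intro q hq
                  obtain ⟨S, hS⟩ := hwgs.1 q hq
                  refine ⟨S, List.mem_filter.2 ⟨hS, ?_⟩⟩
                  simp only [decide_eq_true_eq]
                  exact hΛof hv q hq
                · intro q hq p hp hpq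
                  exact hwgs.2 q hq p (List.mem_filter.1 hp).1 hpq
              · exact .unk
            refine .rowRow ?_ ?_
            · intro q hq
              obtain ⟨S, hS⟩ := (prec_record_row hw'').1 q hq
              have hqΛ : q.1 ∈ vs.flatMap labf := by
                have := (List.mem_filter.1 hS).2
                simpa using this
              exact ⟨g q.1, List.mem_map.2 ⟨q.1, hqΛ, rfl⟩⟩
            · intro q hq p hp hpq
              obtain ⟨l, hlΛ, rfl⟩ := List.mem_map.1 hp
              have hpq' : l = q.1 := hpq
              refine (hg l hlΛ).2 _ ?_
              intro T' hT' hT'C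
              have hg' : Prec (.record ((ws.filter (fun r => decide (r.1 ∈ vs.flatMap labf) && !(r.1 == l))) ++ [(l, T')])) (.row fs') := by
                refine hL' _ ?_ ?_
                · refine .record ?_
                  intro p' hp'
                  rcases List.mem_append.1 hp' with hp' | hp'
                  · exact hws p' (List.mem_filter.1 hp').1
                  · simp at hp'; rw [hp']; exact hT'
                · intro v hv
                  rcases hrow v hv with ⟨gs, rfl⟩ | rfl
                  · have hwgs := prec_record_row (hwv _ hv)
                    refine .recordRow ?_ ?_
                    · intro q' hq'
                      by_cases hql : q'.1 = l
                      · refine ⟨T', List.mem_append_right _ ?_⟩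
                        rw [hql]
                        simp
                      · obtain ⟨S, hS⟩ := hwgs.1 q' hq'
                        refine ⟨S, List.mem_append_left _ (List.mem_filter.2 ⟨hS, ?_⟩)⟩
                        simp only [Bool.and_eq_true, decide_eq_true_eq, Bool.not_eq_true',
                          beq_eq_false_iff_ne, ne_eq]
                        exact ⟨hΛof hv q' hq', hql⟩
                    · intro q' hq' p' hp' hpq''
                      rcases List.mem_append.1 hp' with hp' | hp'
                      · exact hwgs.2 q' hq' p' (List.mem_filter.1 hp').1 hpq''
                      · simp at hp'
                        rw [hp'] at hpq'' ⊢
                        have : q'.1 = l := hpq''.symm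
                        refine hT'C _ (hCof hv ?_)
                        rw [← this]
                        exact hq'
                  · exact .unk
              have hmem : (l, T') ∈ (ws.filter (fun r => decide (r.1 ∈ vs.flatMap labf) && !(r.1 == l))) ++ [(l, T')] := by
                simp
              exact (prec_record_row hg').2 q hq (l, T') hmem hpq'
          · exact .unk

/-- A gradual type has a candidate codomain iff it has a ⊑-least
candidate codomain; hence the gradual codomain operator (returning the least
candidate) is a well-defined partial function defined exactly on the plausible
function types. -/
theorem candidate_cod_iff_least_candidate_cod :
    ∀ S : GType,
      ((∃ S', CandidateCod S S') ↔
        (∃ S', CandidateCod S S' ∧ ∀ S'', CandidateCod S S'' → Prec S' S'')) ∧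
      ((∃ S', CandidateCod S S') ↔ PlausibleFun S) := by
  intro S
  have hpl2cand : PlausibleFun S → ∃ S', CandidateCod S S' ∧
      ∀ S'', CandidateCod S S'' → Prec S' S'' := by
    intro hpl
    obtain ⟨T₁, T₂, hT₁, hT₂, hprec⟩ := hpl
    rcases prec_arrow_left hprec with ⟨S₁, S₂, rfl, h1, h2⟩ | rfl
    · -- S = S₁ → S₂
      obtain ⟨L, hub, hmin⟩ := exists_least_ub (sumsz [S₂]) [S₂] le_rfl T₂ hT₂
        (by intro v hv; simp at hv; rw [hv]; exact h2)
      refine ⟨L, ⟨⟨T₁, T₂, hT₁, hT₂, .arrow h1 h2⟩, ?_⟩, ?_⟩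
      · intro U₁ U₂ hU₁ hU₂ hU
        refine hub U₂ hU₂ ?_
        intro v hv
        simp at hv
        rw [hv]
        exact (prec_arrow_arrow hU).2
      · intro S'' hS''
        refine hmin S'' ?_
        intro T hT hTv
        exact hS''.2 T₁ T hT₁ hT (.arrow h1 (hTv S₂ (by simp)))
    · -- S = ?
      refine ⟨.unk, ⟨⟨T₁, T₂, hT₁, hT₂, .unk⟩, fun _ _ _ _ _ => .unk⟩, ?_⟩
      intro S'' hS''
      have hi : Prec .int S'' := hS''.2 .int .int .int .int .unk
      have hb : Prec .bool S'' := hS''.2 .int .bool .int .bool .unk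
      rw [forces_unk hi hb]
      exact .unk
  refine ⟨⟨fun ⟨S', h⟩ => hpl2cand h.1, fun ⟨S', h, _⟩ => ⟨S', h⟩⟩,
    ⟨fun ⟨S', h⟩ => h.1, fun hpl => ?_⟩⟩
  obtain ⟨S', h, _⟩ := hpl2cand hpl
  exact ⟨S', h⟩

end GTFL
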